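/- Let V be a finite-dimensional vector space over a field k of characteristic zero with dim V ≥ 1. The space of GL(V)-invariant symmetric bilinear forms on V ⊕ V* is one-dimensional, spanned by the form B((x,y),(x',y')) = ⟨y',x⟩ + ⟨y,x'⟩. -/
import Mathlib


open Module

/-- The action of `GL(V)` on `V ⊕ V*`: `g • (x, y) = (g x, (g*)⁻¹ y)`, where
`(g*)⁻¹ y = y ∘ g⁻¹`. -/
noncomputable def glAct {k V : Type*} [Field k] [AddCommGroup V] [Module k V]
    (g : V ≃ₗ[k] V) (w : V × Module.Dual k V) : V × Module.Dual k V :=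
  (g w.1, w.2 ∘ₗ (g.symm : V →ₗ[k] V))

section aux
variable {k V : Type*} [Field k] [AddCommGroup V] [Module k V]

/-- Transvection-like linear equivalence `v ↦ v + φ v • x` when `φ x = 0`. -/
noncomputable def transv (φ : Module.Dual k V) (x : V) (h : φ x = 0) : V ≃ₗ[k] V :=
  LinearEquiv.ofLinear (LinearMap.id + φ.smulRight x) (LinearMap.id - φ.smulRight x)
    (by ext v; simp [h, smul_smul]) (by ext v; simp [h, smul_smul])

@[simp] lemma transv_apply (φ : Module.Dual k V) (x : V) (h : φ x = 0) (v : V) :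
    transv φ x h v = v + φ v • x := rfl

/-- A linear map that is locally a scalar is a scalar multiple of the identity. -/
lemma locally_scalar {S : V →ₗ[k] V} (hS : ∀ v : V, ∃ c : k, S v = c • v) :
    ∃ c : k, ∀ v, S v = c • v := by
  by_cases hV : ∀ v : V, v = 0
  · exact ⟨0, fun v => by rw [hV v]; simp⟩
  push_neg at hV
  obtain ⟨v₀, hv₀⟩ := hV
  obtain ⟨c, hc⟩ := hS v₀
  refine ⟨c, fun v => ?_⟩
  obtain ⟨a, ha⟩ := hS v
  by_cases hdep : ∃ t : k, v = t • v₀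
  · obtain ⟨t, rfl⟩ := hdep
    rw [map_smul, hc, smul_comm]
  · push_neg at hdep
    obtain ⟨b, hb⟩ := hS (v + v₀)
    rw [map_add, ha, hc] at hb
    have h1 : (a - b) • v = (b - c) • v₀ := by
      rw [sub_smul, sub_smul]
      linear_combination (norm := module) hb
    have hab : a = b := by
      by_contra hne
      apply hdep ((a - b)⁻¹ * (b - c))
      rw [mul_smul, ← h1, inv_smul_smul₀ (sub_ne_zero.mpr hne)]
    have hbc : b = c := by
      by_contra hne
      apply hv₀
      have := h1
      rw [hab, sub_self, zero_smul] at this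
      have h2 : (b - c) • v₀ = 0 := this.symm
      rcases smul_eq_zero.mp h2 with h3 | h3
      · exact absurd (sub_eq_zero.mp h3) hne
      · exact h3
    rw [ha, hab, hbc]
end aux

/-- For `dim V ≥ 1`, the space of `GL(V)`-invariant symmetric bilinear
forms on `V ⊕ V*` is one-dimensional, spanned by
`B((x,y),(x',y')) = ⟨y',x⟩ + ⟨y,x'⟩`: `B` is a nonzero invariant symmetric bilinear
form, and every invariant symmetric bilinear form is a scalar multiple of `B`. -/

theorem invariant_symmetric_forms_one_dimensional
    (k V : Type*) [Field k] [CharZero k] [AddCommGroup V] [Module k V]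
    [FiniteDimensional k V] (hV : 1 ≤ Module.finrank k V)
    (B : (V × Module.Dual k V) →ₗ[k] (V × Module.Dual k V) →ₗ[k] k)
    (hB : ∀ w w' : V × Module.Dual k V, B w w' = w'.2 w.1 + w.2 w'.1) :
    (B ≠ 0) ∧
    (∀ w w', B w w' = B w' w) ∧
    (∀ (g : V ≃ₗ[k] V) (w w'), B (glAct g w) (glAct g w') = B w w') ∧
    (∀ f : (V × Module.Dual k V) →ₗ[k] (V × Module.Dual k V) →ₗ[k] k,
      (∀ w w', f w w' = f w' w) →
      (∀ (g : V ≃ₗ[k] V) (w w'), f (glAct g w) (glAct g w') = f w w') →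
      ∃ c : k, f = c • B) := by
  have hVnt : Nontrivial V := by
    rw [← Module.finrank_pos_iff (R := k)]; omega
  obtain ⟨x₀, hx₀⟩ := exists_ne (0 : V)
  refine ⟨?_, ?_, ?_, ?_⟩
  · -- B ≠ 0
    intro h
    obtain ⟨y₀, hy₀⟩ : ∃ y : Module.Dual k V, y x₀ ≠ 0 := by
      by_contra hc
      push_neg at hc
      exact hx₀ ((Module.forall_dual_apply_eq_zero_iff k x₀).mp hc)
    have := hB (x₀, y₀) (x₀, y₀)
    rw [h] at this
    simp only [LinearMap.zero_apply] at this
    apply hy₀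
    have h2 : (2 : k) * y₀ x₀ = 0 := by rw [two_mul]; exact this.symm
    rcases mul_eq_zero.mp h2 with h | h
    · exact absurd h two_ne_zero
    · exact h
  · intro w w'; rw [hB, hB]; ring
  · intro g w w'
    simp only [glAct, hB, LinearMap.comp_apply, LinearEquiv.coe_coe, LinearEquiv.symm_apply_apply]
  · intro f hsym hinv
    -- scaling equivalence by 2
    have h2 : (2 : k) ≠ 0 := two_ne_zero
    set g₂ : V ≃ₗ[k] V := LinearEquiv.smulOfNeZero k V 2 h2 with hg₂
    -- V-V part vanishes
    have hVV : ∀ x x' : V, f (x, 0) (x', 0) = 0 := by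
      intro x x'
      have h := hinv g₂ (x, 0) (x', 0)
      have e1 : ∀ z : V, glAct g₂ (z, (0 : Module.Dual k V))
          = (2 : k) • (z, (0 : Module.Dual k V)) := by
        intro z; simp [glAct, hg₂, Prod.ext_iff]
      rw [e1 x, e1 x'] at h
      simp only [map_smul, LinearMap.smul_apply, smul_eq_mul] at h
      have : ((2 : k) * 2 - 1) * f (x, 0) (x', 0) = 0 := by ring_nf; linear_combination h
      rcases mul_eq_zero.mp this with h' | h'
      · norm_num at h'
      · exact h'
    -- Dual-Dual part vanishes
    have hDD : ∀ y y' : Module.Dual k V, f (0, y) (0, y') = 0 := by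
      intro y y'
      have h := hinv g₂ (0, y) (0, y')
      have e1 : ∀ y : Module.Dual k V, glAct g₂ ((0 : V), y) = (2 : k)⁻¹ • ((0 : V), y) := by
        intro y
        refine Prod.ext (by simp [glAct]) ?_
        ext v
        simp only [glAct, hg₂, LinearMap.comp_apply, LinearEquiv.coe_coe, Prod.smul_snd,
          LinearMap.smul_apply, smul_eq_mul]
        rw [show (LinearEquiv.smulOfNeZero k V 2 h2).symm v = (2:k)⁻¹ • v by
          apply (LinearEquiv.smulOfNeZero k V 2 h2).injective
          simp [LinearEquiv.smulOfNeZero, LinearEquiv.smulOfUnit, Units.smul_def, smul_smul,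
            mul_inv_cancel₀ h2]]
        rw [map_smul, smul_eq_mul]
      rw [e1 y, e1 y'] at h
      simp only [map_smul, LinearMap.smul_apply, smul_eq_mul] at h
      have h4 : ((2:k) * 2) * ((2:k)⁻¹ * (2⁻¹ * f (0, y) (0, y'))) = ((2:k) * 2) * f (0, y) (0, y') := by
        rw [h]
      rw [show ((2:k) * 2) * ((2:k)⁻¹ * (2⁻¹ * f (0, y) (0, y')))
          = ((2:k) * 2⁻¹) * ((2:k) * 2⁻¹) * f (0, y) (0, y') by ring,
        mul_inv_cancel₀ h2, one_mul, one_mul] at h4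
      have : ((2:k) * 2 - 1) * f (0, y) (0, y') = 0 := by linear_combination -h4
      rcases mul_eq_zero.mp this with h' | h'
      · norm_num at h'
      · exact h'
    -- the operator S
    set φ : V →ₗ[k] Module.Dual k (Module.Dual k V) :=
      (f ∘ₗ LinearMap.inl k V (Module.Dual k V)).compl₂ (LinearMap.inr k V (Module.Dual k V))
      with hφ
    set S : V →ₗ[k] V := ((Module.evalEquiv k V).symm : _ →ₗ[k] V) ∘ₗ φ with hSdef
    have hSap : ∀ (x : V) (y : Module.Dual k V), y (S x) = f (x, 0) (0, y) := by
      intro x y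
      rw [hSdef]
      simp only [LinearMap.comp_apply, LinearEquiv.coe_coe]
      rw [Module.apply_evalEquiv_symm_apply]
      simp [hφ]
    have hcross : ∀ (g : V ≃ₗ[k] V) (x : V) (y : Module.Dual k V),
        f (g x, 0) (0, y) = f (x, 0) (0, y ∘ₗ (g : V →ₗ[k] V)) := by
      intro g x y
      have h := hinv g (x, 0) (0, y ∘ₗ (g : V →ₗ[k] V))
      have e1 : glAct g (x, (0 : Module.Dual k V)) = (g x, 0) := by
        simp [glAct, Prod.ext_iff]
      have e2 : glAct g ((0 : V), y ∘ₗ (g : V →ₗ[k] V)) = (0, y) := by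
        refine Prod.ext (by simp [glAct]) ?_
        ext v; simp [glAct]
      rw [e1, e2] at h
      exact h
    have hcomm : ∀ (g : V ≃ₗ[k] V) (x : V), S (g x) = g (S x) := by
      intro g x
      rw [← sub_eq_zero, ← Module.forall_dual_apply_eq_zero_iff k]
      intro y
      rw [map_sub, hSap, hcross g x y, ← hSap, sub_eq_zero]
      simp
    -- local scalarity
    have hloc : ∀ v : V, ∃ c : k, S v = c • v := by
      intro v
      by_cases hv : v = 0
      · exact ⟨0, by simp [hv]⟩
      by_contra hc
      push_neg at hc
      have hmem : S v ∉ Submodule.span k {v} := by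
        intro hm
        obtain ⟨a, ha⟩ := Submodule.mem_span_singleton.mp hm
        exact hc a ha.symm
      obtain ⟨ψ₀, hψ₀, hψ₀'⟩ :=
        Submodule.exists_dual_map_eq_bot_of_notMem hmem inferInstance
      have hψv : ψ₀ v = 0 := by
        have : ψ₀ v ∈ Submodule.map ψ₀ (Submodule.span k {v}) :=
          ⟨v, Submodule.mem_span_singleton_self v, rfl⟩
        rw [hψ₀'] at this
        simpa using this
      set ψ : Module.Dual k V := (ψ₀ (S v))⁻¹ • ψ₀ with hψ
      have hψv' : ψ v = 0 := by simp [hψ, hψv]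
      have hψS : ψ (S v) = 1 := by simp [hψ, inv_mul_cancel₀ hψ₀]
      have h := hcomm (transv ψ v hψv') v
      rw [transv_apply, hψv', zero_smul, add_zero, transv_apply, hψS, one_smul] at h
      exact hv (left_eq_add.mp h)
    obtain ⟨c, hc⟩ := locally_scalar hloc
    have hcr : ∀ (x : V) (y : Module.Dual k V), f (x, 0) (0, y) = c * y x := by
      intro x y
      rw [← hSap, hc, map_smul, smul_eq_mul]
    refine ⟨c, ?_⟩
    apply LinearMap.ext; intro w; apply LinearMap.ext; intro w'
    have hw : (w : V × Module.Dual k V) = (w.1, 0) + (0, w.2) := by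
      ext <;> simp
    have hw' : (w' : V × Module.Dual k V) = (w'.1, 0) + (0, w'.2) := by
      ext <;> simp
    rw [hw, hw']
    simp only [map_add, LinearMap.add_apply]
    rw [hVV, hDD, hcr, hsym (0, w.2) (w'.1, 0), hcr]
    simp only [LinearMap.smul_apply, smul_eq_mul, hB]
    simp
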